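/- The function g(a) := e^a E₁(a) = ∫_0^∞ e^{-t}(t+a)⁻¹ dt satisfies lim_{a→0⁺} g(a) = ∞ and lim_{a→∞} g(a) = 0; together with strict monotonicity, g maps (0,∞) bijectively onto (0,∞). Consequently, for every fixed q > 0 the equation q·e^a E₁(a) = 1 has exactly one solution a > 0. -/

import Mathlib

open MeasureTheory Set Filter

/-- `g(a) = eᵃE₁(a) = ∫_0^∞ e^{-t}(t+a)⁻¹ dt`. -/
noncomputable def gFun (a : ℝ) : ℝ := ∫ t in Ioi (0 : ℝ), Real.exp (-t) / (t + a)

lemma gMeas {a : ℝ} (ha : 0 < a) :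
    AEStronglyMeasurable (fun t => Real.exp (-t) / (t + a)) (volume.restrict (Ioi 0)) := by
  apply ContinuousOn.aestronglyMeasurable _ measurableSet_Ioi
  refine ContinuousOn.div (Real.continuous_exp.comp continuous_neg).continuousOn
    (continuous_id.add continuous_const).continuousOn ?_
  intro t ht
  have : (0:ℝ) < t := ht
  positivity

lemma gInt {a : ℝ} (ha : 0 < a) :
    IntegrableOn (fun t => Real.exp (-t) / (t + a)) (Ioi 0) := by
  have hbi : IntegrableOn (fun t => Real.exp (-t) * a⁻¹) (Ioi 0) := by
    have := (exp_neg_integrableOn_Ioi 0 (one_pos)).mul_const a⁻¹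
    simpa [IntegrableOn] using this
  refine hbi.mono' (gMeas ha) ?_
  filter_upwards [ae_restrict_mem measurableSet_Ioi] with t ht
  have ht0 : (0:ℝ) < t := ht
  rw [Real.norm_eq_abs, abs_of_nonneg (by positivity)]
  rw [div_eq_mul_inv]
  gcongr
  linarith

lemma gLower {a : ℝ} (ha : 0 < a) :
    Real.exp (-1) * (Real.log (1 + a) - Real.log a) ≤ gFun a := by
  have hIoc : IntegrableOn (fun t => Real.exp (-t) / (t + a)) (Ioc 0 1) :=
    (gInt ha).mono_set Ioc_subset_Ioi_self
  have hIoc2 : IntegrableOn (fun t => Real.exp (-1) / (t + a)) (Ioc 0 1) := by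
    apply ContinuousOn.integrableOn_Icc (by
      refine ContinuousOn.div continuousOn_const (continuous_id.add continuous_const).continuousOn ?_
      intro t ht
      have : (0:ℝ) ≤ t := ht.1
      positivity) |>.mono_set Ioc_subset_Icc_self
  have h1 : ∫ t in Ioc (0:ℝ) 1, Real.exp (-1) / (t + a) ≤ ∫ t in Ioc (0:ℝ) 1, Real.exp (-t) / (t + a) := by
    refine setIntegral_mono_on hIoc2 hIoc measurableSet_Ioc ?_
    intro t ht
    have h2 : (0:ℝ) < t + a := by have := ht.1; linarith
    gcongr
    exact ht.2
  have h2 : ∫ t in Ioc (0:ℝ) 1, Real.exp (-t) / (t + a) ≤ gFun a := by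
    refine setIntegral_mono_set (gInt ha) ?_ (HasSubset.Subset.eventuallyLE Ioc_subset_Ioi_self)
    filter_upwards [ae_restrict_mem measurableSet_Ioi] with t ht
    have : (0:ℝ) < t := ht
    positivity
  have h3 : ∫ t in Ioc (0:ℝ) 1, Real.exp (-1) / (t + a)
      = Real.exp (-1) * (Real.log (1 + a) - Real.log a) := by
    have := intervalIntegral.integral_comp_add_right (a := 0) (b := 1) (fun x => Real.exp (-1) / x) a
    rw [← intervalIntegral.integral_of_le one_pos.le] at *
    rw [this]
    simp only [zero_add]
    simp only [div_eq_mul_inv]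
    rw [intervalIntegral.integral_const_mul]
    rw [integral_inv (by
      intro h
      rcases (Set.mem_uIcc.1 h) with ⟨h1,h2⟩|⟨h1,h2⟩ <;> linarith)]
    rw [Real.log_div (by linarith) (by linarith)]
  linarith

lemma gNonneg {a : ℝ} (ha : 0 < a) : 0 ≤ gFun a := by
  apply setIntegral_nonneg measurableSet_Ioi
  intro t ht
  have : (0:ℝ) < t := ht
  positivity

lemma gPos {a : ℝ} (ha : 0 < a) : 0 < gFun a := by
  have h := gLower ha
  have hlog : Real.log a < Real.log (1 + a) := Real.log_lt_log ha (by linarith)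
  have : 0 < Real.exp (-1) * (Real.log (1 + a) - Real.log a) := by
    have := Real.exp_pos (-1); nlinarith
  linarith

lemma gUpper {a : ℝ} (ha : 0 < a) : gFun a ≤ a⁻¹ := by
  have hbi : IntegrableOn (fun t => Real.exp (-t) * a⁻¹) (Ioi 0) := by
    simpa [IntegrableOn] using (exp_neg_integrableOn_Ioi 0 (one_pos)).mul_const a⁻¹
  have h1 : gFun a ≤ ∫ t in Ioi (0:ℝ), Real.exp (-t) * a⁻¹ := by
    refine setIntegral_mono_on (gInt ha) hbi measurableSet_Ioi ?_
    intro t ht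
    have ht0 : (0:ℝ) < t := ht
    rw [div_eq_mul_inv]
    gcongr
    linarith
  have h2 : ∫ t in Ioi (0:ℝ), Real.exp (-t) * a⁻¹ = a⁻¹ := by
    rw [integral_mul_const, integral_exp_neg_Ioi_zero, one_mul]
  linarith

lemma gAnti : StrictAntiOn gFun (Ioi 0) := by
  intro a ha b hb hab
  have ha0 : (0:ℝ) < a := ha
  have hb0 : (0:ℝ) < b := hb
  have key : 0 < ∫ t in Ioi (0:ℝ), (Real.exp (-t) / (t + a) - Real.exp (-t) / (t + b)) := by
    have hint : IntegrableOn (fun t => Real.exp (-t) / (t + a) - Real.exp (-t) / (t + b)) (Ioi 0) :=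
      (gInt ha0).sub (gInt hb0)
    have hnn : 0 ≤ᵐ[volume.restrict (Ioi (0:ℝ))]
        fun t => Real.exp (-t) / (t + a) - Real.exp (-t) / (t + b) := by
      filter_upwards [ae_restrict_mem measurableSet_Ioi] with t ht
      have ht0 : (0:ℝ) < t := ht
      have : Real.exp (-t) / (t + b) ≤ Real.exp (-t) / (t + a) := by
        gcongr <;> linarith
      simpa using this
    rw [setIntegral_pos_iff_support_of_nonneg_ae hnn hint]
    have hsub : Ioi (0:ℝ) ⊆ Function.support
        (fun t => Real.exp (-t) / (t + a) - Real.exp (-t) / (t + b)) := by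
      intro t ht
      have ht0 : (0:ℝ) < t := ht
      have : Real.exp (-t) / (t + b) < Real.exp (-t) / (t + a) := by
        apply div_lt_div_of_pos_left (Real.exp_pos _) (by linarith) (by linarith)
      simp only [Function.mem_support]
      intro h
      nlinarith
    have : Function.support (fun t => Real.exp (-t) / (t + a) - Real.exp (-t) / (t + b))
        ∩ Ioi 0 = Ioi 0 := by
      exact inter_eq_self_of_subset_right hsub
    rw [this, Real.volume_Ioi]
    simp
  have hsplit : (∫ t in Ioi (0:ℝ), (Real.exp (-t) / (t + a) - Real.exp (-t) / (t + b)))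
      = gFun a - gFun b := integral_sub (gInt ha0) (gInt hb0)
  linarith [hsplit ▸ key]

lemma gCont : ContinuousOn gFun (Ioi 0) := by
  intro a ha
  have ha0 : (0:ℝ) < a := ha
  have hnhds : Ioi (a/2) ∈ nhds a := Ioi_mem_nhds (by linarith)
  have : ContinuousAt gFun a := by
    apply continuousAt_of_dominated (bound := fun t => Real.exp (-t) / (a/2))
    · filter_upwards [hnhds] with x hx
      exact gMeas (lt_trans (by linarith) hx)
    · filter_upwards [hnhds] with x hx
      filter_upwards [ae_restrict_mem measurableSet_Ioi] with t ht
      have ht0 : (0:ℝ) < t := ht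
      have hx0 : a/2 < x := hx
      have htx : (0:ℝ) < t + x := by linarith
      rw [Real.norm_eq_abs, abs_of_nonneg (by positivity)]
      gcongr
      linarith
    · have : IntegrableOn (fun t => Real.exp (-t) * (a/2)⁻¹) (Ioi 0) := by
        simpa [IntegrableOn] using (exp_neg_integrableOn_Ioi 0 (one_pos)).mul_const (a/2)⁻¹
      simpa [div_eq_mul_inv, IntegrableOn] using this
    · filter_upwards [ae_restrict_mem measurableSet_Ioi] with t ht
      have ht0 : (0:ℝ) < t := ht
      refine ContinuousAt.div continuousAt_const
        ((continuous_const.add continuous_id).continuousAt) ?_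
      positivity
  exact this.continuousWithinAt

lemma gTendstoZero : Tendsto gFun atTop (nhds 0) := by
  apply squeeze_zero' ?_ ?_ tendsto_inv_atTop_zero
  · filter_upwards [eventually_gt_atTop (0:ℝ)] with a ha using gNonneg ha
  · filter_upwards [eventually_gt_atTop (0:ℝ)] with a ha using gUpper ha

lemma gTendstoTop : Tendsto gFun (nhdsWithin 0 (Ioi 0)) atTop := by
  apply tendsto_atTop_mono' _ _ ?_
  · exact fun a => Real.exp (-1) * (Real.log (1 + a) - Real.log a)
  · filter_upwards [self_mem_nhdsWithin] with a ha
    exact gLower ha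
  · apply Tendsto.const_mul_atTop (Real.exp_pos (-1))
    have h1 : Tendsto (fun a : ℝ => Real.log (1 + a)) (nhdsWithin 0 (Ioi 0)) (nhds 0) := by
      have : ContinuousAt (fun a : ℝ => Real.log (1 + a)) 0 := by
        refine (Real.continuousAt_log (by norm_num)).comp
          ((continuous_const.add continuous_id).continuousAt)
      have := this.tendsto.mono_left (nhdsWithin_le_nhds (s := Ioi (0:ℝ)))
      simpa using this
    have h2 : Tendsto (fun a : ℝ => -Real.log a) (nhdsWithin 0 (Ioi 0)) atTop :=
      tendsto_neg_atBot_atTop.comp Real.tendsto_log_nhdsGT_zero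
    simpa [sub_eq_add_neg] using h1.add_atTop h2

lemma gBijOn : Set.BijOn gFun (Ioi 0) (Ioi 0) := by
  refine ⟨fun a ha => gPos ha, gAnti.injOn, ?_⟩
  intro y hy
  have hy0 : (0:ℝ) < y := hy
  -- find a₁ with gFun a₁ > y
  have h1 : ∃ a₁ : ℝ, 0 < a₁ ∧ y < gFun a₁ := by
    have := (gTendstoTop.eventually (eventually_gt_atTop y)).and self_mem_nhdsWithin
    obtain ⟨a₁, h, ha₁⟩ := this.exists
    exact ⟨a₁, ha₁, h⟩
  obtain ⟨a₁, ha₁, hya₁⟩ := h1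
  have h2 : ∃ a₂ : ℝ, a₁ < a₂ ∧ gFun a₂ < y := by
    have hev : ∀ᶠ a in atTop, gFun a < y := gTendstoZero.eventually_lt_const hy0
    obtain ⟨a₂, h, ha₂⟩ := (hev.and (eventually_gt_atTop a₁)).exists
    exact ⟨a₂, ha₂, h⟩
  obtain ⟨a₂, ha₂, hya₂⟩ := h2
  have hsub : Icc a₁ a₂ ⊆ Ioi 0 := fun x hx => lt_of_lt_of_le ha₁ hx.1
  have := intermediate_value_Icc' (le_of_lt ha₂) (gCont.mono hsub)
  have hmem : y ∈ Icc (gFun a₂) (gFun a₁) := ⟨hya₂.le, hya₁.le⟩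
  obtain ⟨x, hx, hxy⟩ := this hmem
  exact ⟨x, hsub hx, hxy⟩

/-- `g` blows up at `0⁺`, tends to `0` at `∞`, maps `(0,∞)` bijectively onto `(0,∞)`;
consequently, for every `q > 0` the equation `q·g(a) = 1` has exactly one solution `a > 0`. -/
theorem stmt10 :
    Tendsto gFun (nhdsWithin 0 (Ioi 0)) atTop ∧
    Tendsto gFun atTop (nhds 0) ∧
    Set.BijOn gFun (Ioi 0) (Ioi 0) ∧
    ∀ q : ℝ, 0 < q → ∃! a : ℝ, 0 < a ∧ q * gFun a = 1 := by
  refine ⟨gTendstoTop, gTendstoZero, gBijOn, ?_⟩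
  intro q hq
  have hq' : (1/q : ℝ) ∈ Ioi (0:ℝ) := by simp [hq]
  obtain ⟨a, ha, hga⟩ := gBijOn.surjOn hq'
  refine ⟨a, ⟨ha, by rw [hga]; field_simp⟩, ?_⟩
  intro b ⟨hb, hgb⟩
  have hgb' : gFun b = 1/q := by field_simp at hgb ⊢; linarith
  exact gBijOn.injOn hb ha (by rw [hgb', hga])
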